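/- arXiv:0902.2834 — 2 statements merged into one kernel-verified Lean document; each statement's English description precedes it below -/
import Mathlib

section
/- Let d ≥ 2, L ≥ 1, and let λ_0, …, λ_{L−1} be real parameters with −1/(d²−1) ≤ λ_i ≤ 1. Writing χ_i({p_j, ρ_j}) = S(Σ_j p_j Δ_{λ_i}(ρ_j)) − Σ_j p_j S(Δ_{λ_i}(ρ_j)) for the Holevo quantity of the i-th depolarizing branch, the supremum of the average and the average of the suprema coincide: (1/L) sup_{{p_j, ρ_j}} Σ_{i=0}^{L−1} χ_i({p_j, ρ_j}) = (1/L) Σ_{i=0}^{L−1} sup_{{p_j, ρ_j}} χ_i({p_j, ρ_j}) = log₂ d − (1/L) Σ_{i=0}^{L−1} S_min(Δ_{λ_i}), where the suprema are over all ensembles of d-dimensional density matrices. -/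
open scoped BigOperators Classical ComplexOrder
open Matrix Filter

/-- The von Neumann entropy of a matrix (in bits): `S(ρ) = −Σ_i μ_i log₂ μ_i`
where `μ_i` are the eigenvalues (defined to be `0` if the matrix is not Hermitian). -/
noncomputable def vnEntropy {m : Type*} [Fintype m] [DecidableEq m]
    (ρ : Matrix m m ℂ) : ℝ :=
  if h : ρ.IsHermitian then -∑ i, (h.eigenvalues i) * Real.logb 2 (h.eigenvalues i) else 0

/-- A density matrix: positive semidefinite with unit trace. -/
def IsDensityMatrix {m : Type*} [Fintype m] [DecidableEq m] (ρ : Matrix m m ℂ) : Prop :=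
  ρ.PosSemidef ∧ ρ.trace = 1

/-- An ensemble `{p_j, ρ_j}`: probabilities summing to one together with density matrices. -/
def IsEnsemble {m : Type*} [Fintype m] [DecidableEq m] {k : ℕ}
    (p : Fin k → ℝ) (ρ : Fin k → Matrix m m ℂ) : Prop :=
  (∀ j, 0 ≤ p j) ∧ (∑ j, p j) = 1 ∧ ∀ j, IsDensityMatrix (ρ j)

/-- The Holevo quantity `χ({p_j, Φ(ρ_j)}) = S(Σ_j p_j Φ(ρ_j)) − Σ_j p_j S(Φ(ρ_j))`. -/
noncomputable def holevoQ {m : Type*} [Fintype m] [DecidableEq m] {k : ℕ}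
    (Φ : Matrix m m ℂ → Matrix m m ℂ) (p : Fin k → ℝ) (ρ : Fin k → Matrix m m ℂ) : ℝ :=
  vnEntropy (∑ j, (p j : ℂ) • Φ (ρ j)) - ∑ j, p j * vnEntropy (Φ (ρ j))

/-- The Holevo capacity `χ*(Φ)`: supremum of the Holevo quantity over all ensembles. -/
noncomputable def holevoCap {m : Type*} [Fintype m] [DecidableEq m]
    (Φ : Matrix m m ℂ → Matrix m m ℂ) : ℝ :=
  sSup {x | ∃ (k : ℕ) (p : Fin k → ℝ) (ρ : Fin k → Matrix m m ℂ),
    IsEnsemble p ρ ∧ x = holevoQ Φ p ρ}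

/-- The minimum output entropy `S_min(Φ)`. -/
noncomputable def minOutEntropy {m : Type*} [Fintype m] [DecidableEq m]
    (Φ : Matrix m m ℂ → Matrix m m ℂ) : ℝ :=
  sInf {x | ∃ ρ, IsDensityMatrix ρ ∧ x = vnEntropy (Φ ρ)}

/-- The `d`-dimensional depolarizing channel `Δ_λ(ρ) = λρ + ((1−λ)/d)(tr ρ) I`. -/
noncomputable def depol (d : ℕ) (lam : ℝ) (ρ : Matrix (Fin d) (Fin d) ℂ) :
    Matrix (Fin d) (Fin d) ℂ :=
  (lam : ℂ) • ρ + (((1 - lam) / d : ℝ) : ℂ) • ρ.trace • (1 : Matrix (Fin d) (Fin d) ℂ)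

/-- The tensor product channel `Φ_0 ⊗ ⋯ ⊗ Φ_{n−1}` acting on matrices on `(ℂ^d)^{⊗n}`,
defined by linearity from its action on tensor products of matrix units. -/
noncomputable def tensorChannel {d n : ℕ}
    (Φ : Fin n → (Matrix (Fin d) (Fin d) ℂ → Matrix (Fin d) (Fin d) ℂ))
    (ρ : Matrix (Fin n → Fin d) (Fin n → Fin d) ℂ) :
    Matrix (Fin n → Fin d) (Fin n → Fin d) ℂ :=
  fun a b => ∑ x : Fin n → Fin d, ∑ y : Fin n → Fin d,
    ρ x y * ∏ k, (Φ k (Matrix.single (x k) (y k) 1)) (a k) (b k)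

/-- The `n`-fold action of the periodic channel with branches `Δ_{λ_0}, …, Δ_{λ_{L−1}}`:
`Ω_per^{(n)}(ρ) = (1/L) Σ_{i=0}^{L−1} (Δ_{λ_i} ⊗ Δ_{λ_{i+1}} ⊗ ⋯ ⊗ Δ_{λ_{i+n−1}})(ρ)`,
indices mod `L`. -/
noncomputable def periodicChannel {d L : ℕ} (hL : 0 < L) (lam : Fin L → ℝ) (n : ℕ)
    (ρ : Matrix (Fin n → Fin d) (Fin n → Fin d) ℂ) :
    Matrix (Fin n → Fin d) (Fin n → Fin d) ℂ :=
  (1 / (L : ℂ)) • ∑ i : Fin L,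
    tensorChannel (fun k : Fin n => depol d (lam ⟨(i.val + k.val) % L, Nat.mod_lt _ hL⟩)) ρ

section Aux
open Polynomial Real

variable {n : Type*} [Fintype n] [DecidableEq n]

lemma charpoly_diag (v : n → ℂ) :
    (diagonal v).charpoly = ∏ i, (X - C (v i)) := by
  have : charmatrix (diagonal v) = diagonal (fun i => X - C (v i)) := by
    ext i j
    by_cases h : i = j
    · subst h; simp
    · simp [charmatrix_apply_ne _ _ _ h, diagonal_apply_ne _ h]
  rw [charpoly, this, det_diagonal]

lemma charpoly_unitary_conj (U : Matrix n n ℂ) (hU : U ∈ Matrix.unitaryGroup n ℂ)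
    (D : Matrix n n ℂ) : (U * D * star U).charpoly = D.charpoly := by
  have h1 : U * star U = 1 := Matrix.mem_unitaryGroup_iff.mp hU
  have key : charmatrix (U * D * star U)
      = (C : ℂ →+* ℂ[X]).mapMatrix U * charmatrix D * (C : ℂ →+* ℂ[X]).mapMatrix (star U) := by
    simp only [charmatrix, mul_sub, sub_mul, _root_.map_mul]
    congr 1
    rw [mul_assoc, scalar_commute (X : ℂ[X]) (Commute.all _) _]
    rw [← mul_assoc, ← _root_.map_mul, h1]
    simp
  have hdet : ((C : ℂ →+* ℂ[X]).mapMatrix U).det * ((C : ℂ →+* ℂ[X]).mapMatrix (star U)).det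
      = 1 := by
    rw [← det_mul, ← _root_.map_mul ((C : ℂ →+* ℂ[X]).mapMatrix) U (star U), h1]
    simp
  rw [charpoly, charpoly, key, det_mul, det_mul, mul_right_comm, hdet, one_mul]

lemma eig_multiset {A : Matrix n n ℂ} (hA : A.IsHermitian) (U : Matrix n n ℂ)
    (hU : U ∈ Matrix.unitaryGroup n ℂ) (f : n → ℝ)
    (hAU : A = U * diagonal (fun i => (f i : ℂ)) * star U) :
    Multiset.map hA.eigenvalues Finset.univ.val = Multiset.map f Finset.univ.val := by
  have key : ∀ (g : n → ℝ), (∏ i, (X - C ((g i : ℂ)))).roots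
      = Multiset.map (fun i => ((g i : ℝ) : ℂ)) Finset.univ.val := by
    intro g
    rw [Finset.prod_eq_multiset_prod]
    rw [show Multiset.map (fun i => X - C ((g i : ℝ) : ℂ)) Finset.univ.val
      = Multiset.map (fun r : ℂ => X - C r)
        (Multiset.map (fun i => ((g i : ℝ) : ℂ)) Finset.univ.val) by
        rw [Multiset.map_map]; rfl]
    rw [roots_multiset_prod_X_sub_C]
  have h1 : A.charpoly = ∏ i, (X - C ((f i : ℂ))) := by
    rw [hAU, charpoly_unitary_conj _ hU, charpoly_diag]
  have h2 : A.charpoly = ∏ i, (X - C ((hA.eigenvalues i : ℂ))) := by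
    conv_lhs => rw [hA.spectral_theorem, Unitary.conjStarAlgAut_apply]
    rw [charpoly_unitary_conj _ (hA.eigenvectorUnitary).2, charpoly_diag]
    rfl
  have h3 := congrArg Polynomial.roots (h2.symm.trans h1)
  rw [key, key] at h3
  have h4 : Multiset.map (fun x : ℝ => (x : ℂ))
        (Multiset.map hA.eigenvalues Finset.univ.val)
      = Multiset.map (fun x : ℝ => (x : ℂ)) (Multiset.map f Finset.univ.val) := by
    rw [Multiset.map_map, Multiset.map_map]
    exact h3
  exact Multiset.map_injective Complex.ofReal_injective h4

lemma sum_g_eig {A : Matrix n n ℂ} (hA : A.IsHermitian) (U : Matrix n n ℂ)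
    (hU : U ∈ Matrix.unitaryGroup n ℂ) (f : n → ℝ)
    (hAU : A = U * diagonal (fun i => (f i : ℂ)) * star U) (g : ℝ → ℝ) :
    ∑ i, g (hA.eigenvalues i) = ∑ i, g (f i) := by
  have h := eig_multiset hA U hU f hAU
  have e1 : ∀ (e : n → ℝ), ∑ i, g (e i)
      = ((Multiset.map e Finset.univ.val).map g).sum := by
    intro e
    rw [Multiset.map_map, Finset.sum]
    rfl
  rw [e1, e1, h]

lemma isHermitian_conj_diag (U : Matrix n n ℂ) (f : n → ℝ) :
    (U * diagonal (fun i => (f i : ℂ)) * star U).IsHermitian := by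
  have hd : (diagonal (fun i => (f i : ℂ))).IsHermitian :=
    isHermitian_diagonal_iff.mpr (fun i => Complex.conj_ofReal (f i))
  simpa [Matrix.star_eq_conjTranspose] using isHermitian_mul_mul_conjTranspose U hd

lemma vnEntropy_conj_diag {A : Matrix n n ℂ} (U : Matrix n n ℂ)
    (hU : U ∈ Matrix.unitaryGroup n ℂ) (f : n → ℝ)
    (hAU : A = U * diagonal (fun i => (f i : ℂ)) * star U) :
    vnEntropy A = (∑ i, Real.negMulLog (f i)) / Real.log 2 := by
  have hA : A.IsHermitian := hAU ▸ isHermitian_conj_diag U f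
  have hg := sum_g_eig hA U hU f hAU Real.negMulLog
  rw [vnEntropy, dif_pos hA]
  rw [← hg, ← Finset.sum_neg_distrib, Finset.sum_div]
  · congr 1
    funext i
    rw [Real.negMulLog, Real.logb]
    ring

end Aux

section Depol
open Real

/-- The minimum output entropy value of the depolarizing channel. -/
noncomputable def hval (d : ℕ) (lam : ℝ) : ℝ :=
  (Real.negMulLog (lam + (1 - lam)/d) + ((d : ℝ) - 1) * Real.negMulLog ((1 - lam)/d))
    / Real.log 2

variable {d : ℕ} {lam : ℝ}

lemma c0_nonneg (hd : 0 < d) (hl2 : lam ≤ 1) : 0 ≤ (1 - lam)/(d : ℝ) := by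
  have : (0:ℝ) < d := by exact_mod_cast hd
  exact div_nonneg (by linarith) this.le

lemma lc_nonneg (hd : 2 ≤ d) (hl1 : -(1/((d : ℝ)^2 - 1)) ≤ lam) (hl2 : lam ≤ 1) :
    0 ≤ lam + (1 - lam)/(d : ℝ) := by
  have hd2 : (2:ℝ) ≤ d := by exact_mod_cast hd
  have hd0 : (0:ℝ) < d := by linarith
  have h3 : (0:ℝ) < (d:ℝ)^2 - 1 := by nlinarith
  have h4 : -1 ≤ lam * ((d:ℝ)^2 - 1) := by
    have := mul_le_mul_of_nonneg_right hl1 (le_of_lt h3)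
    have he : -(1/((d:ℝ)^2-1)) * ((d:ℝ)^2 - 1) = -1 := by
      field_simp
    linarith [he ▸ this]
  have key : 0 ≤ lam * ((d:ℝ) - 1) + 1 := by
    rcases le_or_gt 0 lam with h | h
    · nlinarith
    · nlinarith [mul_nonneg (mul_nonneg (neg_nonneg.2 h.le) hd0.le)
        (by linarith : (0:ℝ) ≤ (d:ℝ) - 1)]
  rw [show lam + (1 - lam)/(d:ℝ) = (lam * ((d:ℝ) - 1) + 1) / d by field_simp; ring]
  positivity

lemma affine_nonneg (hd : 2 ≤ d) (hl1 : -(1/((d : ℝ)^2 - 1)) ≤ lam) (hl2 : lam ≤ 1)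
    {μ : ℝ} (hμ0 : 0 ≤ μ) (hμ1 : μ ≤ 1) : 0 ≤ lam * μ + (1 - lam)/(d : ℝ) := by
  have h1 := c0_nonneg (Nat.lt_of_lt_of_le (by norm_num) hd) hl2
  have h2 := lc_nonneg hd hl1 hl2
  rcases le_or_gt 0 lam with h | h
  · nlinarith [mul_nonneg h hμ0]
  · nlinarith [mul_nonneg (neg_nonneg.2 h.le) (by linarith : (0:ℝ) ≤ 1 - μ)]

lemma negMulLog_affine_ge (hd : 2 ≤ d) (hl1 : -(1/((d : ℝ)^2 - 1)) ≤ lam) (hl2 : lam ≤ 1)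
    {μ : ℝ} (hμ0 : 0 ≤ μ) (hμ1 : μ ≤ 1) :
    μ * Real.negMulLog (lam + (1 - lam)/d) + (1 - μ) * Real.negMulLog ((1 - lam)/d)
      ≤ Real.negMulLog (lam * μ + (1 - lam)/d) := by
  have h1 := c0_nonneg (Nat.lt_of_lt_of_le (by norm_num) hd) hl2
  have h2 := lc_nonneg hd hl1 hl2
  have hconc := Real.concaveOn_negMulLog.2
  have := hconc (Set.mem_Ici.2 h2) (Set.mem_Ici.2 h1) (a := μ) (b := 1 - μ)
    hμ0 (by linarith) (by ring)
  simp only [smul_eq_mul] at this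
  have harg : μ * (lam + (1 - lam)/(d:ℝ)) + (1 - μ) * ((1 - lam)/(d:ℝ))
      = lam * μ + (1 - lam)/(d:ℝ) := by ring
  rw [harg] at this
  exact this

end Depol

section Depol2
open Real

variable {d : ℕ} {lam : ℝ}

lemma posSemidef_smul_real {n : Type*} [Fintype n] [DecidableEq n]
    {A : Matrix n n ℂ} (hA : A.PosSemidef) {c : ℝ} (hc : 0 ≤ c) :
    ((c : ℂ) • A).PosSemidef := by
  refine ⟨?_, fun x => ?_⟩
  · rw [Matrix.IsHermitian, Matrix.conjTranspose_smul, hA.1.eq]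
    congr 1
    simp [Complex.conj_ofReal]
  · have h : (x.sum fun i xi ↦ x.sum fun j xj ↦ star xi * ((c : ℂ) • A) i j * xj)
        = (c : ℂ) * (x.sum fun i xi ↦ x.sum fun j xj ↦ star xi * A i j * xj) := by
      simp only [Finsupp.sum, Finset.mul_sum, Matrix.smul_apply, smul_eq_mul]
      refine Finset.sum_congr rfl fun i _ => Finset.sum_congr rfl fun j _ => ?_
      ring
    rw [h]
    exact mul_nonneg (by exact_mod_cast hc) (hA.2 x)

set_option maxHeartbeats 1000000 in
lemma density_sum_smul {n : Type*} [Fintype n] [DecidableEq n] {k : ℕ}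
    {p : Fin k → ℝ} {ρ : Fin k → Matrix n n ℂ} (hens : IsEnsemble p ρ) :
    IsDensityMatrix (∑ j, (p j : ℂ) • ρ j) := by
  constructor
  · apply Finset.sum_induction _ _ (fun a b ha hb => ha.add hb) Matrix.PosSemidef.zero
    intro j _
    exact posSemidef_smul_real (hens.2.2 j).1 (hens.1 j)
  · rw [Matrix.trace_sum]
    have h : ∀ j ∈ Finset.univ, ((p j : ℂ) • ρ j).trace = (p j : ℂ) := by
      intro j _
      rw [Matrix.trace_smul, (hens.2.2 j).2, smul_eq_mul, mul_one]
    rw [Finset.sum_congr rfl h, ← Complex.ofReal_sum, hens.2.1, Complex.ofReal_one]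

noncomputable def depolL (d : ℕ) (lam : ℝ) :
    Matrix (Fin d) (Fin d) ℂ →ₗ[ℂ] Matrix (Fin d) (Fin d) ℂ where
  toFun := depol d lam
  map_add' A B := by
    simp only [depol, Matrix.trace_add, smul_add, add_smul]
    abel
  map_smul' c A := by
    simp only [depol, Matrix.trace_smul, smul_add, smul_smul, RingHom.id_apply, smul_eq_mul]
    module

lemma depol_spectral {ρ : Matrix (Fin d) (Fin d) ℂ} (hρ : IsDensityMatrix ρ) :
    depol d lam ρ = (hρ.1.1.eigenvectorUnitary : Matrix (Fin d) (Fin d) ℂ)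
      * Matrix.diagonal (fun i => ((lam * hρ.1.1.eigenvalues i + (1 - lam)/d : ℝ) : ℂ))
      * star (hρ.1.1.eigenvectorUnitary : Matrix (Fin d) (Fin d) ℂ) := by
  have hH := hρ.1.1
  set U := (hH.eigenvectorUnitary : Matrix (Fin d) (Fin d) ℂ) with hUdef
  have h1 : U * star U = 1 := Matrix.mem_unitaryGroup_iff.mp hH.eigenvectorUnitary.2
  have hspec : ρ = U * Matrix.diagonal (fun i => ((hH.eigenvalues i : ℝ) : ℂ)) * star U :=
    hH.spectral_theorem
  have hD : (lam : ℂ) • Matrix.diagonal (fun i => ((hH.eigenvalues i : ℝ) : ℂ))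
        + ((((1 - lam)/d : ℝ)) : ℂ) • (1 : Matrix (Fin d) (Fin d) ℂ)
      = Matrix.diagonal (fun i => ((lam * hH.eigenvalues i + (1 - lam)/d : ℝ) : ℂ)) := by
    rw [← Matrix.diagonal_one, ← Matrix.diagonal_smul, ← Matrix.diagonal_smul,
      Matrix.diagonal_add]
    refine congrArg Matrix.diagonal (funext fun i => ?_)
    simp only [Pi.add_apply, Pi.smul_apply, Function.comp_apply, smul_eq_mul,
      Pi.one_apply, mul_one]
    push_cast
    ring
  have hconj : U * ((lam : ℂ) • Matrix.diagonal (fun i => ((hH.eigenvalues i : ℝ) : ℂ))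
        + ((((1 - lam)/d : ℝ)) : ℂ) • 1) * star U
      = (lam : ℂ) • (U * Matrix.diagonal (fun i => ((hH.eigenvalues i : ℝ) : ℂ)) * star U)
        + ((((1 - lam)/d : ℝ)) : ℂ) • 1 := by
    rw [Matrix.mul_add, Matrix.add_mul, Matrix.mul_smul, Matrix.smul_mul,
      Matrix.mul_smul, Matrix.smul_mul, Matrix.mul_one, h1]
  have hgoal : depol d lam ρ
      = U * ((lam : ℂ) • Matrix.diagonal (fun i => ((hH.eigenvalues i : ℝ) : ℂ))
        + ((((1 - lam)/d : ℝ)) : ℂ) • 1) * star U := by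
    rw [hconj, ← hspec, depol, hρ.2, one_smul]
  rw [hgoal, hD]

lemma sum_eig_density {ρ : Matrix (Fin d) (Fin d) ℂ} (hρ : IsDensityMatrix ρ) :
    ∑ i, hρ.1.1.eigenvalues i = 1 := by
  have hH := hρ.1.1
  have htr : ρ.trace = ∑ i, ((hH.eigenvalues i : ℝ) : ℂ) := by
    conv_lhs => rw [hH.spectral_theorem, Unitary.conjStarAlgAut_apply]
    rw [Matrix.trace_mul_cycle,
      Matrix.mem_unitaryGroup_iff'.mp hH.eigenvectorUnitary.2, Matrix.one_mul,
      Matrix.trace_diagonal]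
    rfl
  have h5 : (1 : ℂ) = ∑ i, ((hH.eigenvalues i : ℝ) : ℂ) := by rw [← hρ.2]; exact htr
  apply Complex.ofReal_injective
  push_cast
  exact h5.symm


lemma depol_sum_smul {k : ℕ} (p : Fin k → ℝ) (ρ : Fin k → Matrix (Fin d) (Fin d) ℂ) :
    ∑ j, (p j : ℂ) • depol d lam (ρ j) = depol d lam (∑ j, (p j : ℂ) • ρ j) := by
  have h := map_sum (depolL d lam) (fun j => (p j : ℂ) • ρ j) Finset.univ
  have h2 : ∀ j ∈ Finset.univ, depolL d lam ((p j : ℂ) • ρ j) = (p j : ℂ) • depol d lam (ρ j) := by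
    intro j _
    rw [LinearMap.map_smul]
    rfl
  rw [Finset.sum_congr rfl h2] at h
  rw [← h]
  rfl

lemma vnEntropy_depol {ρ : Matrix (Fin d) (Fin d) ℂ} (hρ : IsDensityMatrix ρ) :
    vnEntropy (depol d lam ρ)
      = (∑ i, Real.negMulLog (lam * hρ.1.1.eigenvalues i + (1 - lam)/d)) / Real.log 2 :=
  vnEntropy_conj_diag _ hρ.1.1.eigenvectorUnitary.2 _ (depol_spectral hρ)

end Depol2

section Depol3
open Real

variable {d : ℕ} {lam : ℝ}

lemma log2_pos : (0:ℝ) < Real.log 2 := Real.log_pos (by norm_num)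

lemma sum_negMulLog_le {f : Fin d → ℝ} (hd : 0 < d) (h0 : ∀ i, 0 ≤ f i)
    (h1 : ∑ i, f i = 1) : ∑ i, Real.negMulLog (f i) ≤ Real.log d := by
  have hdR : (0:ℝ) < d := by exact_mod_cast hd
  have hj := Real.concaveOn_negMulLog.le_map_sum (t := (Finset.univ : Finset (Fin d)))
      (w := fun _ : Fin d => 1/(d:ℝ)) (p := f) (fun i _ => by positivity)
      (by rw [Finset.sum_const, Finset.card_univ, Fintype.card_fin, nsmul_eq_mul]; field_simp)
      (fun i _ => Set.mem_Ici.2 (h0 i))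
  simp only [smul_eq_mul] at hj
  rw [← Finset.mul_sum, ← Finset.mul_sum, h1, mul_one] at hj
  have hval1 : Real.negMulLog (1/(d:ℝ)) = (1/(d:ℝ)) * Real.log d := by
    rw [Real.negMulLog, one_div, Real.log_inv]
    ring
  rw [hval1] at hj
  have := (mul_le_mul_iff_right₀ (show (0:ℝ) < 1/(d:ℝ) by positivity)).mp hj
  exact this

lemma sum_affine (hd : 0 < d) {μ : Fin d → ℝ} (hsum : ∑ i, μ i = 1) :
    ∑ i, (lam * μ i + (1 - lam)/d) = 1 := by
  have hdR : (0:ℝ) < d := by exact_mod_cast hd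
  rw [Finset.sum_add_distrib, ← Finset.mul_sum, hsum, Finset.sum_const, Finset.card_univ,
    Fintype.card_fin, nsmul_eq_mul]
  field_simp
  ring

lemma eig_le_one {μ : Fin d → ℝ} (h0 : ∀ i, 0 ≤ μ i) (hsum : ∑ i, μ i = 1) (i : Fin d) :
    μ i ≤ 1 := by
  have := Finset.single_le_sum (f := μ) (fun j _ => h0 j) (Finset.mem_univ i)
  rw [hsum] at this
  exact this

lemma sum_negMulLog_affine_ge (hd : 2 ≤ d) (hl1 : -(1/((d : ℝ)^2 - 1)) ≤ lam)
    (hl2 : lam ≤ 1) {μ : Fin d → ℝ} (h0 : ∀ i, 0 ≤ μ i) (hsum : ∑ i, μ i = 1) :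
    Real.negMulLog (lam + (1 - lam)/d) + ((d:ℝ) - 1) * Real.negMulLog ((1 - lam)/d)
      ≤ ∑ i, Real.negMulLog (lam * μ i + (1 - lam)/d) := by
  have hμ1 := eig_le_one h0 hsum
  have hstep : Real.negMulLog (lam + (1 - lam)/d) + ((d:ℝ) - 1) * Real.negMulLog ((1 - lam)/d)
      = ∑ i, (μ i * Real.negMulLog (lam + (1 - lam)/d)
          + (1 - μ i) * Real.negMulLog ((1 - lam)/d)) := by
    rw [Finset.sum_add_distrib, ← Finset.sum_mul, hsum, one_mul, ← Finset.sum_mul]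
    congr 2
    rw [Finset.sum_sub_distrib, hsum, Finset.sum_const, Finset.card_univ, Fintype.card_fin,
      nsmul_eq_mul, mul_one]
  rw [hstep]
  exact Finset.sum_le_sum fun i _ => negMulLog_affine_ge hd hl1 hl2 (h0 i) (hμ1 i)

lemma vnEntropy_depol_ge (hd : 2 ≤ d) (hl1 : -(1/((d : ℝ)^2 - 1)) ≤ lam) (hl2 : lam ≤ 1)
    {ρ : Matrix (Fin d) (Fin d) ℂ} (hρ : IsDensityMatrix ρ) :
    hval d lam ≤ vnEntropy (depol d lam ρ) := by
  rw [vnEntropy_depol hρ, hval, div_le_div_iff_of_pos_right log2_pos]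
  exact sum_negMulLog_affine_ge hd hl1 hl2 (fun i => hρ.1.eigenvalues_nonneg i)
    (sum_eig_density hρ)

lemma vnEntropy_avg_le (hd : 2 ≤ d) (hl1 : -(1/((d : ℝ)^2 - 1)) ≤ lam) (hl2 : lam ≤ 1)
    {k : ℕ} {p : Fin k → ℝ} {ρ : Fin k → Matrix (Fin d) (Fin d) ℂ}
    (hens : IsEnsemble p ρ) :
    vnEntropy (∑ j, (p j : ℂ) • depol d lam (ρ j)) ≤ Real.logb 2 d := by
  rw [depol_sum_smul, vnEntropy_depol (density_sum_smul hens)]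
  have hσ := density_sum_smul hens
  have h0 := fun i => hσ.1.eigenvalues_nonneg i
  have hsum := sum_eig_density hσ
  have hd0 : 0 < d := by omega
  have hbound : ∑ i, Real.negMulLog (lam * hσ.1.1.eigenvalues i + (1 - lam)/d)
      ≤ Real.log d :=
    sum_negMulLog_le hd0 (fun i => affine_nonneg hd hl1 hl2 (h0 i) (eig_le_one h0 hsum i))
      (sum_affine hd0 hsum)
  rw [Real.logb]
  exact div_le_div_of_nonneg_right' hbound
where
  div_le_div_of_nonneg_right' {a b : ℝ} (h : a ≤ b) : a / Real.log 2 ≤ b / Real.log 2 :=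
    (div_le_div_iff_of_pos_right log2_pos).mpr h

lemma holevoQ_le (hd : 2 ≤ d) (hl1 : -(1/((d : ℝ)^2 - 1)) ≤ lam) (hl2 : lam ≤ 1)
    {k : ℕ} {p : Fin k → ℝ} {ρ : Fin k → Matrix (Fin d) (Fin d) ℂ}
    (hens : IsEnsemble p ρ) :
    holevoQ (depol d lam) p ρ ≤ Real.logb 2 d - hval d lam := by
  rw [holevoQ]
  have h1 := vnEntropy_avg_le hd hl1 hl2 hens
  have h2 : hval d lam = ∑ j, p j * hval d lam := by
    rw [← Finset.sum_mul, hens.2.1, one_mul]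
  have h3 : ∑ j, p j * hval d lam ≤ ∑ j, p j * vnEntropy (depol d lam (ρ j)) :=
    Finset.sum_le_sum fun j _ =>
      mul_le_mul_of_nonneg_left (vnEntropy_depol_ge hd hl1 hl2 (hens.2.2 j)) (hens.1 j)
  linarith

end Depol3

section Depol4
open Real

variable {d : ℕ} {lam : ℝ}

lemma stdBasis_diag (j : Fin d) :
    (Matrix.single j j 1 : Matrix (Fin d) (Fin d) ℂ)
      = Matrix.diagonal (fun i => if i = j then 1 else 0) := by
  ext a b
  simp only [Matrix.single, Matrix.of_apply]
  by_cases hab : a = b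
  · subst hab
    rw [Matrix.diagonal_apply_eq]
    by_cases haj : a = j
    · simp [haj]
    · have hja : ¬ j = a := fun h => haj h.symm
      simp [haj, hja]
  · rw [Matrix.diagonal_apply_ne _ hab, if_neg]
    rintro ⟨h1, h2⟩
    exact hab (by omega)

lemma density_E (j : Fin d) :
    IsDensityMatrix (Matrix.single j j 1 : Matrix (Fin d) (Fin d) ℂ) := by
  rw [stdBasis_diag]
  constructor
  · apply Matrix.PosSemidef.diagonal
    intro i
    by_cases h : i = j <;> simp [h]
  · rw [Matrix.trace_diagonal]
    simp

lemma sum_E : ∑ j : Fin d, (Matrix.single j j 1 : Matrix (Fin d) (Fin d) ℂ) = 1 := by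
  have : ∀ j ∈ Finset.univ, (Matrix.single j j 1 : Matrix (Fin d) (Fin d) ℂ)
      = Matrix.diagonal (fun i => if i = j then 1 else 0) := fun j _ => stdBasis_diag j
  rw [Finset.sum_congr rfl this]
  ext a b
  rw [Matrix.sum_apply]
  by_cases h : a = b
  · subst h
    simp [Matrix.diagonal_apply_eq, Matrix.one_apply_eq]
  · rw [Matrix.one_apply_ne h]
    apply Finset.sum_eq_zero
    intro j _
    exact Matrix.diagonal_apply_ne _ h

lemma depol_unif_diag (hd : 0 < d) :
    depol d lam (((((1:ℝ)/(d:ℝ) : ℝ)) : ℂ) • 1)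
      = Matrix.diagonal (fun _ : Fin d => (((1:ℝ)/(d:ℝ) : ℝ) : ℂ)) := by
  have hdR : (0:ℝ) < d := by exact_mod_cast hd
  have htr : (((((1:ℝ)/(d:ℝ) : ℝ)) : ℂ) • (1 : Matrix (Fin d) (Fin d) ℂ)).trace = 1 := by
    rw [Matrix.trace_smul, Matrix.trace_one, Fintype.card_fin, smul_eq_mul]
    push_cast
    field_simp
  rw [depol, htr, one_smul, ← Matrix.diagonal_one, ← Matrix.diagonal_smul,
    ← Matrix.diagonal_smul, ← Matrix.diagonal_smul, Matrix.diagonal_add]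
  refine congrArg Matrix.diagonal (funext fun i => ?_)
  simp only [Pi.smul_apply, Pi.one_apply, smul_eq_mul, mul_one]
  push_cast
  field_simp
  ring

lemma avg_state (hd : 0 < d) :
    ∑ j : Fin d, (((1/(d:ℝ) : ℝ)) : ℂ) • depol d lam (Matrix.single j j 1)
      = Matrix.diagonal (fun _ : Fin d => (((1:ℝ)/(d:ℝ) : ℝ) : ℂ)) := by
  rw [depol_sum_smul, ← Finset.smul_sum, sum_E, ← depol_unif_diag hd]

lemma vnEntropy_unif (hd : 0 < d) :
    vnEntropy (Matrix.diagonal (fun _ : Fin d => (((1:ℝ)/(d:ℝ) : ℝ) : ℂ)))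
      = Real.logb 2 d := by
  have hdR : (0:ℝ) < d := by exact_mod_cast hd
  rw [vnEntropy_conj_diag (1 : Matrix (Fin d) (Fin d) ℂ) (one_mem _)
    (fun _ => (1:ℝ)/(d:ℝ)) (by simp)]
  rw [Finset.sum_const, Finset.card_univ, Fintype.card_fin, nsmul_eq_mul]
  rw [show Real.negMulLog ((1:ℝ)/(d:ℝ)) = (1/(d:ℝ)) * Real.log d by
    rw [Real.negMulLog, one_div, Real.log_inv]; ring]
  rw [Real.logb]
  field_simp

lemma depol_E_diag (j : Fin d) :
    depol d lam (Matrix.single j j 1)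
      = Matrix.diagonal (fun i =>
          (((if i = j then lam + (1 - lam)/d else (1 - lam)/d) : ℝ) : ℂ)) := by
  rw [stdBasis_diag, depol]
  have htr : (Matrix.diagonal (fun i : Fin d => if i = j then (1:ℂ) else 0)).trace = 1 := by
    rw [Matrix.trace_diagonal]
    simp
  rw [htr, one_smul, ← Matrix.diagonal_one, ← Matrix.diagonal_smul, ← Matrix.diagonal_smul,
    Matrix.diagonal_add]
  refine congrArg Matrix.diagonal (funext fun i => ?_)
  by_cases h : i = j <;>
    simp only [Pi.smul_apply, Pi.one_apply, smul_eq_mul, mul_one, h, if_true, if_false,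
      mul_zero, mul_ite] <;> push_cast <;> ring

lemma vnEntropy_depol_E (hd : 0 < d) (j : Fin d) :
    vnEntropy (depol d lam (Matrix.single j j 1)) = hval d lam := by
  rw [depol_E_diag, vnEntropy_conj_diag (1 : Matrix (Fin d) (Fin d) ℂ) (one_mem _)
    (fun i => if i = j then lam + (1 - lam)/d else (1 - lam)/d) (by simp), hval]
  congr 1
  rw [← Finset.add_sum_erase _ _ (Finset.mem_univ j)]
  have hB : ∀ i ∈ Finset.univ.erase j,
      Real.negMulLog (if i = j then lam + (1 - lam)/d else (1 - lam)/d)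
        = Real.negMulLog ((1 - lam)/d) := by
    intro i hi
    rw [if_neg (Finset.ne_of_mem_erase hi)]
  rw [Finset.sum_congr rfl hB, Finset.sum_const, Finset.card_erase_of_mem (Finset.mem_univ j),
    Finset.card_univ, Fintype.card_fin, nsmul_eq_mul, if_pos rfl]
  congr 1
  rw [Nat.cast_sub hd]
  norm_num

lemma ensemble_unif (hd : 0 < d) :
    IsEnsemble (fun _ : Fin d => 1/(d:ℝ)) (fun j : Fin d => Matrix.single j j 1) := by
  have hdR : (0:ℝ) < d := by exact_mod_cast hd
  refine ⟨fun _ => by positivity, ?_, fun j => density_E j⟩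
  rw [Finset.sum_const, Finset.card_univ, Fintype.card_fin, nsmul_eq_mul]
  field_simp

lemma holevoQ_opt (hd : 0 < d) :
    holevoQ (depol d lam) (fun _ : Fin d => 1/(d:ℝ))
        (fun j : Fin d => Matrix.single j j 1)
      = Real.logb 2 d - hval d lam := by
  have hdR : (0:ℝ) < d := by exact_mod_cast hd
  rw [holevoQ]
  congr 1
  · rw [avg_state hd, vnEntropy_unif hd]
  · have : ∀ j ∈ Finset.univ, (1/(d:ℝ)) * vnEntropy (depol d lam (Matrix.single j j 1))
        = (1/(d:ℝ)) * hval d lam := by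
      intro j _
      rw [vnEntropy_depol_E hd j]
    rw [Finset.sum_congr rfl this, Finset.sum_const, Finset.card_univ, Fintype.card_fin,
      nsmul_eq_mul]
    field_simp

end Depol4

section Final
open Real

variable {d : ℕ} {lam : ℝ}

lemma minOut_eq (hd : 2 ≤ d) (hl1 : -(1/((d : ℝ)^2 - 1)) ≤ lam) (hl2 : lam ≤ 1) :
    minOutEntropy (depol d lam) = hval d lam := by
  have hd0 : 0 < d := by omega
  have hmem : hval d lam ∈ {x | ∃ ρ, IsDensityMatrix ρ ∧ x = vnEntropy (depol d lam ρ)} := by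
    exact ⟨Matrix.single (⟨0, hd0⟩ : Fin d) (⟨0, hd0⟩ : Fin d) 1, density_E _,
      (vnEntropy_depol_E hd0 _).symm⟩
  have hlb : ∀ x ∈ {x | ∃ ρ, IsDensityMatrix ρ ∧ x = vnEntropy (depol d lam ρ)},
      hval d lam ≤ x := by
    rintro x ⟨ρ, hρ, rfl⟩
    exact vnEntropy_depol_ge hd hl1 hl2 hρ
  exact le_antisymm (csInf_le ⟨hval d lam, hlb⟩ hmem) (le_csInf ⟨_, hmem⟩ hlb)

lemma sup_eq (hd : 2 ≤ d) (hl1 : -(1/((d : ℝ)^2 - 1)) ≤ lam) (hl2 : lam ≤ 1) :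
    sSup {x | ∃ (k : ℕ) (p : Fin k → ℝ) (ρ : Fin k → Matrix (Fin d) (Fin d) ℂ),
        IsEnsemble p ρ ∧ x = holevoQ (depol d lam) p ρ}
      = Real.logb 2 d - hval d lam := by
  have hd0 : 0 < d := by omega
  have hub : ∀ x ∈ {x | ∃ (k : ℕ) (p : Fin k → ℝ) (ρ : Fin k → Matrix (Fin d) (Fin d) ℂ),
      IsEnsemble p ρ ∧ x = holevoQ (depol d lam) p ρ}, x ≤ Real.logb 2 d - hval d lam := by
    rintro x ⟨k, p, ρ, hens, rfl⟩
    exact holevoQ_le hd hl1 hl2 hens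
  have hmem : Real.logb 2 d - hval d lam
      ∈ {x | ∃ (k : ℕ) (p : Fin k → ℝ) (ρ : Fin k → Matrix (Fin d) (Fin d) ℂ),
        IsEnsemble p ρ ∧ x = holevoQ (depol d lam) p ρ} :=
    ⟨d, fun _ => 1/(d:ℝ), fun j => Matrix.single j j 1, ensemble_unif hd0,
      (holevoQ_opt hd0).symm⟩
  exact le_antisymm (csSup_le ⟨_, hmem⟩ hub) (le_csSup ⟨_, hub⟩ hmem)

end Final

/-- For depolarizing branches, the supremum of the average and the
average of the suprema of the branch Holevo quantities coincide, and both equal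
`log₂ d − (1/L) Σ_i S_min(Δ_{λ_i})`. -/
theorem periodic_product_state_capacity
    (d L : ℕ) (hd : 2 ≤ d) (hL : 1 ≤ L) (lam : Fin L → ℝ)
    (hlam : ∀ i, -(1 / ((d : ℝ)^2 - 1)) ≤ lam i ∧ lam i ≤ 1) :
    (1 / (L : ℝ)) * sSup {x | ∃ (k : ℕ) (p : Fin k → ℝ)
        (ρ : Fin k → Matrix (Fin d) (Fin d) ℂ),
        IsEnsemble p ρ ∧ x = ∑ i : Fin L, holevoQ (depol d (lam i)) p ρ}
      = (1 / (L : ℝ)) * ∑ i : Fin L,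
          sSup {x | ∃ (k : ℕ) (p : Fin k → ℝ)
            (ρ : Fin k → Matrix (Fin d) (Fin d) ℂ),
            IsEnsemble p ρ ∧ x = holevoQ (depol d (lam i)) p ρ}
    ∧
    (1 / (L : ℝ)) * ∑ i : Fin L,
        sSup {x | ∃ (k : ℕ) (p : Fin k → ℝ)
          (ρ : Fin k → Matrix (Fin d) (Fin d) ℂ),
          IsEnsemble p ρ ∧ x = holevoQ (depol d (lam i)) p ρ}
      = Real.logb 2 d - (1 / (L : ℝ)) * ∑ i : Fin L, minOutEntropy (depol d (lam i)) := by
  have hd0 : 0 < d := by omega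
  have hL0 : (0:ℝ) < L := by exact_mod_cast hL
  have hsupi : ∀ i : Fin L,
      sSup {x | ∃ (k : ℕ) (p : Fin k → ℝ) (ρ : Fin k → Matrix (Fin d) (Fin d) ℂ),
        IsEnsemble p ρ ∧ x = holevoQ (depol d (lam i)) p ρ}
      = Real.logb 2 d - hval d (lam i) :=
    fun i => sup_eq hd (hlam i).1 (hlam i).2
  have hsupsum : sSup {x | ∃ (k : ℕ) (p : Fin k → ℝ)
        (ρ : Fin k → Matrix (Fin d) (Fin d) ℂ),
        IsEnsemble p ρ ∧ x = ∑ i : Fin L, holevoQ (depol d (lam i)) p ρ}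
      = ∑ i : Fin L, (Real.logb 2 d - hval d (lam i)) := by
    have hub : ∀ x ∈ {x | ∃ (k : ℕ) (p : Fin k → ℝ)
        (ρ : Fin k → Matrix (Fin d) (Fin d) ℂ),
        IsEnsemble p ρ ∧ x = ∑ i : Fin L, holevoQ (depol d (lam i)) p ρ},
        x ≤ ∑ i : Fin L, (Real.logb 2 d - hval d (lam i)) := by
      rintro x ⟨k, p, ρ, hens, rfl⟩
      exact Finset.sum_le_sum fun i _ => holevoQ_le hd (hlam i).1 (hlam i).2 hens
    have hmem : (∑ i : Fin L, (Real.logb 2 d - hval d (lam i)))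
        ∈ {x | ∃ (k : ℕ) (p : Fin k → ℝ)
          (ρ : Fin k → Matrix (Fin d) (Fin d) ℂ),
          IsEnsemble p ρ ∧ x = ∑ i : Fin L, holevoQ (depol d (lam i)) p ρ} := by
      refine ⟨d, fun _ => 1/(d:ℝ), fun j => Matrix.single j j 1,
        ensemble_unif hd0, ?_⟩
      exact (Finset.sum_congr rfl fun i _ => holevoQ_opt hd0).symm
    exact le_antisymm (csSup_le ⟨_, hmem⟩ hub) (le_csSup ⟨_, hub⟩ hmem)
  have hsum2 : ∑ i : Fin L, sSup {x | ∃ (k : ℕ) (p : Fin k → ℝ)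
        (ρ : Fin k → Matrix (Fin d) (Fin d) ℂ),
        IsEnsemble p ρ ∧ x = holevoQ (depol d (lam i)) p ρ}
      = ∑ i : Fin L, (Real.logb 2 d - hval d (lam i)) :=
    Finset.sum_congr rfl fun i _ => hsupi i
  constructor
  · rw [hsupsum, hsum2]
  · rw [hsum2]
    have hmin : ∑ i : Fin L, minOutEntropy (depol d (lam i))
        = ∑ i : Fin L, hval d (lam i) :=
      Finset.sum_congr rfl fun i _ => minOut_eq hd (hlam i).1 (hlam i).2
    rw [hmin, Finset.sum_sub_distrib, Finset.sum_const, Finset.card_univ, Fintype.card_fin,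
      nsmul_eq_mul]
    field_simp
end

section
/- Let d ≥ 2, M ≥ 1, and let λ_1, …, λ_M be real parameters with −1/(d²−1) ≤ λ_i ≤ 1. Then the product-state capacity of the convex combination of the depolarizing channels Δ_{λ_1}, …, Δ_{λ_M} satisfies sup over all ensembles {p_j, ρ_j} of d-dimensional density matrices of min_{1≤i≤M} χ({p_j, Δ_{λ_i}(ρ_j)}) = min_{1≤i≤M} χ*(Δ_{λ_i}) = log₂ d − max_{1≤i≤M} S_min(Δ_{λ_i}); in particular the supremum of the minimum equals the minimum of the suprema. -/
open scoped BigOperators Classical ComplexOrder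
open Matrix Filter

namespace DepolAux


noncomputable def g2 (x : ℝ) : ℝ := x * Real.logb 2 x

lemma convexOn_g2 : ConvexOn ℝ (Set.Ici 0) g2 := by
  have h2 : (0:ℝ) ≤ (Real.log 2)⁻¹ := inv_nonneg.2 (Real.log_nonneg one_le_two)
  have h := Real.convexOn_mul_log.smul h2
  suffices e : g2 = fun x => (Real.log 2)⁻¹ • (x * Real.log x) by rw [e]; exact h
  funext x
  simp only [g2, Real.logb, smul_eq_mul]
  ring

lemma g2_sum_le {k : ℕ} (w a : Fin k → ℝ) (hw : ∀ i, 0 ≤ w i) (h1 : ∑ i, w i = 1)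
    (ha : ∀ i, 0 ≤ a i) : g2 (∑ i, w i * a i) ≤ ∑ i, w i * g2 (a i) := by
  have := convexOn_g2.map_sum_le (t := Finset.univ) (p := a)
    (fun i _ => hw i) h1 (fun i _ => ha i)
  simpa [smul_eq_mul] using this

lemma neg_sum_g2_le {d : ℕ} (hd : 0 < d) (μ : Fin d → ℝ) (h0 : ∀ j, 0 ≤ μ j)
    (h1 : ∑ j, μ j = 1) : -∑ j, g2 (μ j) ≤ Real.logb 2 d := by
  have hd' : (0:ℝ) < d := by exact_mod_cast hd
  have hdne : (d:ℝ) ≠ 0 := ne_of_gt hd'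
  have key := g2_sum_le (fun _ => 1/(d:ℝ)) μ (fun _ => by positivity)
    (by simp [Finset.sum_const, Finset.card_univ, mul_comm]; field_simp) h0
  have hsum : ∑ i, (1/(d:ℝ)) * μ i = 1/(d:ℝ) := by
    rw [← Finset.mul_sum, h1, mul_one]
  rw [hsum] at key
  have hg : g2 (1/(d:ℝ)) = -(1/(d:ℝ)) * Real.logb 2 d := by
    rw [g2, one_div, Real.logb_inv]; ring
  rw [hg, ← Finset.mul_sum] at key
  have := mul_le_mul_of_nonneg_left key (le_of_lt hd')
  rw [← mul_assoc, ← mul_assoc] at this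
  rw [mul_neg, mul_one_div, div_self hdne] at this
  linarith

lemma sum_ite_const {d : ℕ} (j0 : Fin d) (A B : ℝ) :
    ∑ j : Fin d, (if j = j0 then A else B) = A + ((d:ℝ)-1) * B := by
  have h : ∀ j : Fin d, (if j = j0 then A else B) = (if j = j0 then A - B else 0) + B := by
    intro j; split <;> ring
  rw [Finset.sum_congr rfl (fun j _ => h j), Finset.sum_add_distrib,
    Finset.sum_ite_eq' Finset.univ j0 (fun _ => A - B)]
  simp only [Finset.mem_univ, if_true, Finset.sum_const, Finset.card_univ, Fintype.card_fin,
    nsmul_eq_mul]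
  ring

lemma sum_g2_affine_le {d : ℕ} (lam : ℝ) (hc : 0 ≤ (1-lam)/(d:ℝ))
    (hlc : 0 ≤ lam + (1-lam)/(d:ℝ))
    (μ : Fin d → ℝ) (h0 : ∀ j, 0 ≤ μ j) (h1 : ∑ j, μ j = 1) :
    ∑ j, g2 (lam * μ j + (1-lam)/(d:ℝ))
      ≤ g2 (lam + (1-lam)/(d:ℝ)) + ((d:ℝ)-1) * g2 ((1-lam)/(d:ℝ)) := by
  set c := (1-lam)/(d:ℝ) with hcdef
  have step : ∀ j : Fin d, g2 (lam * μ j + c)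
      ≤ ∑ k, μ k * g2 (if j = k then lam + c else c) := by
    intro j
    have hrep : lam * μ j + c = ∑ k, μ k * (if j = k then lam + c else c) := by
      have expand : ∀ k : Fin d, μ k * (if j = k then lam + c else c)
          = (if j = k then lam * μ k else 0) + μ k * c := by
        intro k; split <;> ring
      rw [Finset.sum_congr rfl (fun k _ => expand k), Finset.sum_add_distrib,
        Finset.sum_ite_eq Finset.univ j (fun k => lam * μ k), ← Finset.sum_mul, h1]
      simp
    rw [hrep]
    exact g2_sum_le μ _ h0 h1 (fun k => by split; exacts [hlc, hc])
  calc ∑ j, g2 (lam * μ j + c)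
      ≤ ∑ j, ∑ k, μ k * g2 (if j = k then lam + c else c) :=
        Finset.sum_le_sum (fun j _ => step j)
    _ = ∑ k, ∑ j, μ k * g2 (if j = k then lam + c else c) := Finset.sum_comm
    _ = ∑ k, μ k * (g2 (lam + c) + ((d:ℝ)-1) * g2 c) := by
        refine Finset.sum_congr rfl (fun k _ => ?_)
        rw [← Finset.mul_sum]
        congr 1
        have h2 : ∀ j : Fin d, g2 (if j = k then lam + c else c)
            = (if j = k then g2 (lam + c) else g2 c) := by
          intro j; split <;> rfl
        rw [Finset.sum_congr rfl (fun j _ => h2 j), sum_ite_const k _ _]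
    _ = g2 (lam + c) + ((d:ℝ)-1) * g2 c := by
        rw [← Finset.sum_mul, h1, one_mul]




def IsDiag {d : ℕ} (A : Matrix (Fin d) (Fin d) ℂ) (v : Fin d → ℝ) : Prop :=
  ∃ U ∈ Matrix.unitaryGroup (Fin d) ℂ,
    A = U * Matrix.diagonal (fun j => (v j : ℂ)) * star U

lemma IsDiag.isHermitian {d : ℕ} {A : Matrix (Fin d) (Fin d) ℂ} {v : Fin d → ℝ}
    (h : IsDiag A v) : A.IsHermitian := by
  obtain ⟨U, hU, rfl⟩ := h
  have hD : (Matrix.diagonal (fun j => ((v j : ℝ) : ℂ))).IsHermitian :=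
    Matrix.isHermitian_diagonal_of_self_adjoint _ (funext fun j => Complex.conj_ofReal _)
  rw [Matrix.star_eq_conjTranspose]
  exact Matrix.isHermitian_mul_mul_conjTranspose U hD

lemma IsDiag.trace_eq {d : ℕ} {A : Matrix (Fin d) (Fin d) ℂ} {v : Fin d → ℝ}
    (h : IsDiag A v) : A.trace = ∑ j, (v j : ℂ) := by
  obtain ⟨U, hU, rfl⟩ := h
  rw [Matrix.trace_mul_cycle, Matrix.mem_unitaryGroup_iff'.mp hU,
    Matrix.one_mul, Matrix.trace_diagonal]

lemma IsDiag.det_sub_eq {d : ℕ} {A : Matrix (Fin d) (Fin d) ℂ} {v : Fin d → ℝ}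
    (h : IsDiag A v) (z : ℂ) :
    (z • (1 : Matrix (Fin d) (Fin d) ℂ) - A).det = ∏ j, (z - (v j : ℂ)) := by
  obtain ⟨U, hU, rfl⟩ := h
  have h1 : z • (1 : Matrix (Fin d) (Fin d) ℂ) = U * (z • 1) * star U := by
    rw [Matrix.mul_smul, Matrix.mul_one, Matrix.smul_mul, Matrix.mem_unitaryGroup_iff.mp hU]
  rw [h1, ← Matrix.sub_mul, ← Matrix.mul_sub, Matrix.det_mul, Matrix.det_mul,
    mul_comm ((U : Matrix (Fin d) (Fin d) ℂ).det), mul_assoc, ← Matrix.det_mul,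
    Matrix.mem_unitaryGroup_iff.mp hU, Matrix.det_one, mul_one,
    Matrix.smul_one_eq_diagonal, Matrix.diagonal_sub, Matrix.det_diagonal]

lemma IsDiag.sum_f {d : ℕ} {A : Matrix (Fin d) (Fin d) ℂ} {v : Fin d → ℝ}
    (h : IsDiag A v) (hA : A.IsHermitian) (f : ℝ → ℝ) :
    ∑ j, f (hA.eigenvalues j) = ∑ j, f (v j) := by
  have h2 : IsDiag A hA.eigenvalues := by
    refine ⟨hA.eigenvectorUnitary, hA.eigenvectorUnitary.2, ?_⟩
    have := hA.spectral_theorem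
    rw [Unitary.conjStarAlgAut_apply] at this
    exact this
  have hpoly : ∏ j, (Polynomial.X - Polynomial.C ((v j : ℂ))) =
      ∏ j, (Polynomial.X - Polynomial.C ((hA.eigenvalues j : ℂ))) := by
    apply Polynomial.funext
    intro z
    simp only [Polynomial.eval_prod, Polynomial.eval_sub, Polynomial.eval_X, Polynomial.eval_C]
    rw [← h.det_sub_eq z, ← h2.det_sub_eq z]
  have hms : (Finset.univ.val.map v) = (Finset.univ.val.map hA.eigenvalues) := by
    apply Multiset.map_injective Complex.ofReal_injective
    have := congrArg Polynomial.roots hpoly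
    rw [Finset.prod_eq_multiset_prod, Finset.prod_eq_multiset_prod] at this
    have e1 : (Multiset.map (fun j => Polynomial.X - Polynomial.C ((v j : ℂ))) Finset.univ.val)
        = Multiset.map (fun a => Polynomial.X - Polynomial.C a)
            (Multiset.map (fun j => ((v j : ℂ))) Finset.univ.val) := by
      rw [Multiset.map_map]; rfl
    have e2 : (Multiset.map (fun j => Polynomial.X - Polynomial.C ((hA.eigenvalues j : ℂ)))
          Finset.univ.val)
        = Multiset.map (fun a => Polynomial.X - Polynomial.C a)
            (Multiset.map (fun j => ((hA.eigenvalues j : ℂ))) Finset.univ.val) := by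
      rw [Multiset.map_map]; rfl
    rw [e1, e2, Polynomial.roots_multiset_prod_X_sub_C,
      Polynomial.roots_multiset_prod_X_sub_C] at this
    rw [Multiset.map_map, Multiset.map_map]
    exact this
  calc ∑ j, f (hA.eigenvalues j) = (Multiset.map f (Finset.univ.val.map hA.eigenvalues)).sum := by
        rw [Multiset.map_map, Finset.sum_eq_multiset_sum]; rfl
    _ = (Multiset.map f (Finset.univ.val.map v)).sum := by rw [hms]
    _ = ∑ j, f (v j) := by rw [Multiset.map_map, Finset.sum_eq_multiset_sum]; rfl

lemma IsDiag.vnEntropy_eq {d : ℕ} {A : Matrix (Fin d) (Fin d) ℂ} {v : Fin d → ℝ}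
    (h : IsDiag A v) : vnEntropy A = -∑ j, g2 (v j) := by
  have hA := h.isHermitian
  have hs := h.sum_f hA (fun x => x * Real.logb 2 x)
  rw [vnEntropy, dif_pos hA]
  rw [show ∑ i, hA.eigenvalues i * Real.logb 2 (hA.eigenvalues i)
      = ∑ i, (fun x => x * Real.logb 2 x) (hA.eigenvalues i) from rfl, hs]
  rfl

lemma IsDiag.posSemidef {d : ℕ} {A : Matrix (Fin d) (Fin d) ℂ} {v : Fin d → ℝ}
    (h : IsDiag A v) (hv : ∀ j, 0 ≤ v j) : A.PosSemidef := by
  obtain ⟨U, hU, rfl⟩ := h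
  have hD : (Matrix.diagonal (fun j => ((v j : ℝ) : ℂ))).PosSemidef :=
    Matrix.PosSemidef.diagonal (fun j => by
      rw [Pi.zero_apply, Complex.zero_le_real]; exact hv j)
  have := hD.mul_mul_conjTranspose_same (U : Matrix (Fin d) (Fin d) ℂ)
  rwa [← Matrix.star_eq_conjTranspose] at this

lemma isDiag_diagonal {d : ℕ} (v : Fin d → ℝ) :
    IsDiag (Matrix.diagonal (fun j => ((v j : ℝ) : ℂ))) v :=
  ⟨1, one_mem _, by simp⟩

lemma isDiag_of_hermitian {d : ℕ} {A : Matrix (Fin d) (Fin d) ℂ} (hA : A.IsHermitian) :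
    IsDiag A hA.eigenvalues := by
  refine ⟨hA.eigenvectorUnitary, hA.eigenvectorUnitary.2, ?_⟩
  have := hA.spectral_theorem
  rw [Unitary.conjStarAlgAut_apply] at this
  exact this

lemma IsDiag.depol_isDiag {d : ℕ} (hd : 0 < d) {A : Matrix (Fin d) (Fin d) ℂ}
    {v : Fin d → ℝ} (lam : ℝ) (h : IsDiag A v) (htr : A.trace = 1) :
    IsDiag (depol d lam A) (fun j => lam * v j + (1-lam)/(d:ℝ)) := by
  obtain ⟨U, hU, hA⟩ := h
  refine ⟨U, hU, ?_⟩
  have hkey : ((lam:ℂ)) • Matrix.diagonal (fun j => ((v j : ℝ) : ℂ))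
        + (((1-lam)/(d:ℝ) : ℝ):ℂ) • (1 : Matrix (Fin d) (Fin d) ℂ)
      = Matrix.diagonal (fun j => ((lam * v j + (1-lam)/(d:ℝ) : ℝ) : ℂ)) := by
    rw [Matrix.smul_one_eq_diagonal, ← Matrix.diagonal_smul, Matrix.diagonal_add]
    congr 1; funext j
    simp only [Pi.smul_apply, smul_eq_mul]
    push_cast; ring
  rw [depol, htr, one_smul, hA, ← hkey, Matrix.mul_add, Matrix.add_mul]
  congr 1
  · rw [Matrix.mul_smul, Matrix.smul_mul]
  · rw [Matrix.mul_smul, Matrix.mul_one, Matrix.smul_mul, Matrix.mem_unitaryGroup_iff.mp hU]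



noncomputable def sminVal (d : ℕ) (lam : ℝ) : ℝ :=
  -(g2 (lam + (1-lam)/(d:ℝ)) + ((d:ℝ)-1) * g2 ((1-lam)/(d:ℝ)))

variable {d : ℕ}

lemma hc_nonneg (lam : ℝ) (h2 : lam ≤ 1) : 0 ≤ (1-lam)/(d:ℝ) :=
  div_nonneg (by linarith) (Nat.cast_nonneg d)

lemma hlc_nonneg (lam : ℝ) (hd : 2 ≤ d) (h1 : -(1/((d:ℝ)^2-1)) ≤ lam) (h2 : lam ≤ 1) :
    0 ≤ lam + (1-lam)/(d:ℝ) := by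
  have hdr : (2:ℝ) ≤ (d:ℝ) := by exact_mod_cast hd
  have hX : (0:ℝ) < (d:ℝ)^2 - 1 := by nlinarith
  have h1' : (-1 : ℝ)/((d:ℝ)^2-1) ≤ lam := by rw [neg_div]; simpa using h1
  have key : (-1 : ℝ) ≤ lam * ((d:ℝ)^2 - 1) := (div_le_iff₀ hX).mp h1'
  have hdpos : (0:ℝ) < (d:ℝ) := by linarith
  have hnum : 0 ≤ lam * (d:ℝ) + (1 - lam) := by nlinarith
  have : 0 ≤ (lam * (d:ℝ) + (1 - lam))/(d:ℝ) := div_nonneg hnum hdpos.le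
  calc (0:ℝ) ≤ (lam * (d:ℝ) + (1 - lam))/(d:ℝ) := this
    _ = lam + (1-lam)/(d:ℝ) := by field_simp

lemma affine_nonneg (lam : ℝ) (hc : 0 ≤ (1-lam)/(d:ℝ)) (hlc : 0 ≤ lam + (1-lam)/(d:ℝ))
    {μ : ℝ} (h0 : 0 ≤ μ) (h1 : μ ≤ 1) : 0 ≤ lam * μ + (1-lam)/(d:ℝ) := by
  nlinarith [mul_nonneg h0 hlc, mul_nonneg (by linarith : (0:ℝ) ≤ 1 - μ) hc]

lemma vnEntropy_le_logb (hd0 : 0 < d) {A : Matrix (Fin d) (Fin d) ℂ}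
    (h : IsDensityMatrix A) : vnEntropy A ≤ Real.logb 2 d := by
  have hH := h.1.1
  rw [(isDiag_of_hermitian hH).vnEntropy_eq]
  refine neg_sum_g2_le hd0 _ (fun j => h.1.eigenvalues_nonneg j) ?_
  have h3 := (isDiag_of_hermitian hH).trace_eq
  rw [h.2] at h3
  exact_mod_cast h3.symm

lemma depol_density (lam : ℝ) (hd : 2 ≤ d) (h1 : -(1/((d:ℝ)^2-1)) ≤ lam) (h2 : lam ≤ 1)
    {A : Matrix (Fin d) (Fin d) ℂ} (hA : IsDensityMatrix A) :
    IsDensityMatrix (depol d lam A) ∧ sminVal d lam ≤ vnEntropy (depol d lam A) := by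
  have hd0 : 0 < d := by omega
  have hdr : ((d:ℝ)) ≠ 0 := by positivity
  have hc := hc_nonneg (d := d) lam h2
  have hlc := hlc_nonneg lam hd h1 h2
  have hH := hA.1.1
  have hDi := (isDiag_of_hermitian hH).depol_isDiag hd0 lam hA.2
  have hμ0 : ∀ j, 0 ≤ hH.eigenvalues j := fun j => hA.1.eigenvalues_nonneg j
  have hμsum : ∑ j, hH.eigenvalues j = 1 := by
    have h3 := (isDiag_of_hermitian hH).trace_eq
    rw [hA.2] at h3
    exact_mod_cast h3.symm
  have hμ1 : ∀ j, hH.eigenvalues j ≤ 1 := fun j =>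
    hμsum ▸ Finset.single_le_sum (fun i _ => hμ0 i) (Finset.mem_univ j)
  refine ⟨⟨hDi.posSemidef (fun j => affine_nonneg lam hc hlc (hμ0 j) (hμ1 j)), ?_⟩, ?_⟩
  · rw [hDi.trace_eq]
    have h4 : ∑ j, (lam * hH.eigenvalues j + (1-lam)/(d:ℝ)) = 1 := by
      rw [Finset.sum_add_distrib, ← Finset.mul_sum, hμsum, Finset.sum_const,
        Finset.card_univ, Fintype.card_fin, nsmul_eq_mul, mul_one]
      field_simp
      ring
    exact_mod_cast h4
  · rw [hDi.vnEntropy_eq, sminVal]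
    have h5 := sum_g2_affine_le lam hc hlc _ hμ0 hμsum
    linarith

/-- The `j0`-th computational basis pure state. -/
noncomputable def basisState (d : ℕ) (j0 : Fin d) : Matrix (Fin d) (Fin d) ℂ :=
  Matrix.diagonal (fun t => (((if t = j0 then (1:ℝ) else 0) : ℝ) : ℂ))

lemma basisState_isDiag (d : ℕ) (j0 : Fin d) :
    IsDiag (basisState d j0) (fun t => if t = j0 then (1:ℝ) else 0) :=
  isDiag_diagonal _

lemma basis_v_sum (j0 : Fin d) : ∑ t, (if t = j0 then (1:ℝ) else 0) = 1 := by
  rw [Finset.sum_ite_eq' Finset.univ j0 (fun _ => (1:ℝ))]; simp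

lemma basisState_density (j0 : Fin d) : IsDensityMatrix (basisState d j0) := by
  constructor
  · exact (basisState_isDiag d j0).posSemidef (fun t => by split <;> norm_num)
  · rw [(basisState_isDiag d j0).trace_eq]
    exact_mod_cast basis_v_sum j0

lemma vnEntropy_depol_basis (lam : ℝ) (hd0 : 0 < d) (j0 : Fin d) :
    vnEntropy (depol d lam (basisState d j0)) = sminVal d lam := by
  rw [((basisState_isDiag d j0).depol_isDiag hd0 lam (basisState_density j0).2).vnEntropy_eq,
    sminVal, neg_inj]
  have h : ∀ t : Fin d, g2 (lam * (if t = j0 then (1:ℝ) else 0) + (1-lam)/(d:ℝ))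
      = (if t = j0 then g2 (lam + (1-lam)/(d:ℝ)) else g2 ((1-lam)/(d:ℝ))) := by
    intro t; split <;> norm_num
  rw [Finset.sum_congr rfl (fun t _ => h t), sum_ite_const j0]

lemma depol_diagonal (lam : ℝ) (v : Fin d → ℝ) (hv : ∑ t, v t = 1) :
    depol d lam (Matrix.diagonal (fun t => ((v t : ℝ):ℂ))) =
      Matrix.diagonal (fun t => ((lam * v t + (1-lam)/(d:ℝ) : ℝ):ℂ)) := by
  have htr : (Matrix.diagonal (fun t => ((v t : ℝ):ℂ))).trace = 1 := by
    rw [Matrix.trace_diagonal]; exact_mod_cast hv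
  rw [depol, htr, one_smul, Matrix.smul_one_eq_diagonal, ← Matrix.diagonal_smul,
    Matrix.diagonal_add]
  congr 1; funext t; simp only [Pi.smul_apply, smul_eq_mul]; push_cast; ring

lemma diagonal_sum {k : ℕ} (F : Fin k → Fin d → ℂ) :
    ∑ j, Matrix.diagonal (F j) = Matrix.diagonal (fun t => ∑ j, F j t) := by
  ext a b
  by_cases hab : a = b
  · subst hab; simp [Matrix.sum_apply, Matrix.diagonal_apply]
  · simp [Matrix.sum_apply, Matrix.diagonal_apply, hab]

lemma avg_eq (lam : ℝ) (hd0 : 0 < d) :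
    (∑ j : Fin d, ((1/(d:ℝ) : ℝ):ℂ) • depol d lam (basisState d j))
      = Matrix.diagonal (fun _ : Fin d => (((1/(d:ℝ)) : ℝ):ℂ)) := by
  have hdr : ((d:ℝ)) ≠ 0 := by positivity
  have step : ∀ j : Fin d, ((1/(d:ℝ) : ℝ):ℂ) • depol d lam (basisState d j)
      = Matrix.diagonal (fun t =>
          (((1/(d:ℝ)) * (lam * (if t = j then (1:ℝ) else 0) + (1-lam)/(d:ℝ)) : ℝ) : ℂ)) := by
    intro j
    rw [basisState, depol_diagonal lam _ (basis_v_sum j), ← Matrix.diagonal_smul]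
    refine congrArg Matrix.diagonal (funext fun t => ?_)
    simp only [Pi.smul_apply, smul_eq_mul]; push_cast; ring
  rw [Finset.sum_congr rfl (fun j _ => step j), diagonal_sum]
  refine congrArg Matrix.diagonal (funext fun t => ?_)
  rw [← Complex.ofReal_sum]
  congr 1
  have h1 : ∑ j : Fin d, (if t = j then (1:ℝ) else 0) = 1 := by
    rw [Finset.sum_ite_eq Finset.univ t (fun _ => (1:ℝ))]; simp
  have h2 : ∀ j : Fin d, (1/(d:ℝ)) * (lam * (if t = j then (1:ℝ) else 0) + (1-lam)/(d:ℝ))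
      = (1/(d:ℝ)) * lam * (if t = j then (1:ℝ) else 0) + (1/(d:ℝ)) * ((1-lam)/(d:ℝ)) := by
    intro j; ring
  rw [Finset.sum_congr rfl (fun j _ => h2 j), Finset.sum_add_distrib, ← Finset.mul_sum, h1,
    Finset.sum_const, Finset.card_univ, Fintype.card_fin, nsmul_eq_mul]
  field_simp
  ring

lemma vnEntropy_unif (hd0 : 0 < d) :
    vnEntropy (Matrix.diagonal (fun _ : Fin d => (((1/(d:ℝ)) : ℝ):ℂ))) = Real.logb 2 d := by
  have hdr : ((d:ℝ)) ≠ 0 := by positivity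
  rw [(isDiag_diagonal (fun _ : Fin d => 1/(d:ℝ))).vnEntropy_eq]
  simp only [Finset.sum_const, Finset.card_univ, Fintype.card_fin, nsmul_eq_mul, g2]
  rw [one_div, Real.logb_inv]
  field_simp

lemma basis_ensemble (hd0 : 0 < d) :
    IsEnsemble (fun _ : Fin d => 1/(d:ℝ)) (fun j => basisState d j) := by
  refine ⟨fun _ => by positivity, ?_, fun j => basisState_density j⟩
  have hdr : ((d:ℝ)) ≠ 0 := by positivity
  simp only [Finset.sum_const, Finset.card_univ, Fintype.card_fin, nsmul_eq_mul]
  field_simp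

lemma holevoQ_basis (lam : ℝ) (hd0 : 0 < d) :
    holevoQ (depol d lam) (fun _ : Fin d => 1/(d:ℝ)) (fun j => basisState d j)
      = Real.logb 2 d - sminVal d lam := by
  have hdr : ((d:ℝ)) ≠ 0 := by positivity
  rw [holevoQ]
  have e1 : (∑ j : Fin d, (((fun _ : Fin d => 1/(d:ℝ)) j : ℝ):ℂ)
      • depol d lam ((fun j => basisState d j) j))
      = Matrix.diagonal (fun _ : Fin d => (((1/(d:ℝ)) : ℝ):ℂ)) := avg_eq lam hd0
  rw [e1, vnEntropy_unif hd0]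
  have e2 : ∀ j : Fin d, (1/(d:ℝ)) * vnEntropy (depol d lam (basisState d j))
      = (1/(d:ℝ)) * sminVal d lam := by
    intro j; rw [vnEntropy_depol_basis lam hd0 j]
  rw [Finset.sum_congr rfl (fun j _ => e2 j), Finset.sum_const, Finset.card_univ,
    Fintype.card_fin, nsmul_eq_mul]
  have : (d:ℝ) * ((1/(d:ℝ)) * sminVal d lam) = sminVal d lam := by field_simp
  rw [this]

lemma smul_posSemidef {A : Matrix (Fin d) (Fin d) ℂ} {c : ℝ} (hc : 0 ≤ c)
    (h : A.PosSemidef) : ((c:ℂ) • A).PosSemidef := by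
  constructor
  · have h1 : ((c:ℂ) • A)ᴴ = star (c:ℂ) • Aᴴ := Matrix.conjTranspose_smul _ _
    rw [Matrix.IsHermitian, h1, Complex.star_def, Complex.conj_ofReal, h.1.eq]
  · intro x
    have h3 := mul_nonneg (Complex.zero_le_real.mpr hc) (h.2 x)
    refine h3.trans_eq ?_
    simp only [Finsupp.mul_sum, Matrix.smul_apply, smul_eq_mul]
    congr 1; funext i xi; congr 1; funext j xj; ring

lemma holevoQ_le (lam : ℝ) (hd : 2 ≤ d) (h1 : -(1/((d:ℝ)^2-1)) ≤ lam) (h2 : lam ≤ 1)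
    {k : ℕ} {p : Fin k → ℝ} {ρ : Fin k → Matrix (Fin d) (Fin d) ℂ}
    (he : IsEnsemble p ρ) :
    holevoQ (depol d lam) p ρ ≤ Real.logb 2 d - sminVal d lam := by
  obtain ⟨hp, hp1, hρ⟩ := he
  have hd0 : 0 < d := by omega
  have hout : ∀ j, IsDensityMatrix (depol d lam (ρ j)) ∧
      sminVal d lam ≤ vnEntropy (depol d lam (ρ j)) :=
    fun j => depol_density lam hd h1 h2 (hρ j)
  have havg : IsDensityMatrix (∑ j, (p j:ℂ) • depol d lam (ρ j)) := by
    constructor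
    · refine Finset.sum_induction _ Matrix.PosSemidef
        (fun a b ha hb => ha.add hb) Matrix.PosSemidef.zero ?_
      intro j _
      exact smul_posSemidef (hp j) (hout j).1.1
    · rw [Matrix.trace_sum]
      simp only [Matrix.trace_smul, smul_eq_mul]
      rw [Finset.sum_congr rfl (fun j _ => by rw [(hout j).1.2, mul_one])]
      exact_mod_cast hp1
  rw [holevoQ]
  have hE1 : vnEntropy (∑ j, (p j:ℂ) • depol d lam (ρ j)) ≤ Real.logb 2 d :=
    vnEntropy_le_logb hd0 havg
  have hE2 : ∑ j, p j * sminVal d lam ≤ ∑ j, p j * vnEntropy (depol d lam (ρ j)) :=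
    Finset.sum_le_sum (fun j _ => mul_le_mul_of_nonneg_left (hout j).2 (hp j))
  rw [← Finset.sum_mul, hp1, one_mul] at hE2
  linarith

lemma holevoCap_eq (lam : ℝ) (hd : 2 ≤ d) (h1 : -(1/((d:ℝ)^2-1)) ≤ lam) (h2 : lam ≤ 1) :
    holevoCap (depol d lam) = Real.logb 2 d - sminVal d lam := by
  have hd0 : 0 < d := by omega
  have hmem : Real.logb 2 d - sminVal d lam ∈ {x | ∃ (k : ℕ) (p : Fin k → ℝ)
      (ρ : Fin k → Matrix (Fin d) (Fin d) ℂ), IsEnsemble p ρ ∧ x = holevoQ (depol d lam) p ρ} :=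
    ⟨d, fun _ => 1/(d:ℝ), fun j => basisState d j, basis_ensemble hd0,
      (holevoQ_basis lam hd0).symm⟩
  have hub : ∀ x ∈ {x | ∃ (k : ℕ) (p : Fin k → ℝ)
      (ρ : Fin k → Matrix (Fin d) (Fin d) ℂ), IsEnsemble p ρ ∧ x = holevoQ (depol d lam) p ρ},
      x ≤ Real.logb 2 d - sminVal d lam := by
    rintro x ⟨k, p, ρ, he, rfl⟩
    exact holevoQ_le lam hd h1 h2 he
  exact le_antisymm (csSup_le ⟨_, hmem⟩ hub) (le_csSup ⟨_, hub⟩ hmem)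

lemma minOut_eq (lam : ℝ) (hd : 2 ≤ d) (h1 : -(1/((d:ℝ)^2-1)) ≤ lam) (h2 : lam ≤ 1) :
    minOutEntropy (depol d lam) = sminVal d lam := by
  have hd0 : 0 < d := by omega
  have hlb : ∀ x ∈ {x | ∃ ρ, IsDensityMatrix ρ ∧ x = vnEntropy (depol d lam ρ)},
      sminVal d lam ≤ x := by
    rintro x ⟨ρ, hρ, rfl⟩
    exact (depol_density lam hd h1 h2 hρ).2
  have hmem : sminVal d lam ∈ {x | ∃ ρ, IsDensityMatrix ρ ∧ x = vnEntropy (depol d lam ρ)} :=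
    ⟨basisState d ⟨0, hd0⟩, basisState_density _, (vnEntropy_depol_basis lam hd0 _).symm⟩
  exact le_antisymm (csInf_le ⟨_, hlb⟩ hmem) (le_csInf ⟨_, hmem⟩ hlb)

end DepolAux

/-- The product-state capacity of a convex combination of depolarizing
channels: the supremum over ensembles of the minimum of the branch Holevo quantities
equals the minimum of the Holevo capacities, which is
`log₂ d − max_i S_min(Δ_{λ_i})`. -/
theorem convex_combination_product_state_capacity
    (d M : ℕ) (hd : 2 ≤ d) (hM : 1 ≤ M) (lam : Fin M → ℝ)
    (hlam : ∀ i, -(1 / ((d : ℝ)^2 - 1)) ≤ lam i ∧ lam i ≤ 1) :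
    sSup {x | ∃ (k : ℕ) (p : Fin k → ℝ) (ρ : Fin k → Matrix (Fin d) (Fin d) ℂ),
        IsEnsemble p ρ ∧ x = ⨅ i : Fin M, holevoQ (depol d (lam i)) p ρ}
      = ⨅ i : Fin M, holevoCap (depol d (lam i))
    ∧ (⨅ i : Fin M, holevoCap (depol d (lam i)))
        = Real.logb 2 d - ⨆ i : Fin M, minOutEntropy (depol d (lam i)) := by
  classical
  have hd0 : 0 < d := by omega
  haveI hMne : Nonempty (Fin M) := ⟨⟨0, hM⟩⟩
  set L := Real.logb 2 d with hL
  have hcap : ∀ i, holevoCap (depol d (lam i)) = L - DepolAux.sminVal d (lam i) := fun i =>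
    DepolAux.holevoCap_eq (lam i) hd (hlam i).1 (hlam i).2
  have hminOut : ∀ i, minOutEntropy (depol d (lam i)) = DepolAux.sminVal d (lam i) := fun i =>
    DepolAux.minOut_eq (lam i) hd (hlam i).1 (hlam i).2
  have hQbasis : ∀ i, holevoQ (depol d (lam i)) (fun _ : Fin d => 1/(d:ℝ))
      (fun j => DepolAux.basisState d j) = L - DepolAux.sminVal d (lam i) := fun i =>
    DepolAux.holevoQ_basis (lam i) hd0
  obtain ⟨i0, hi0⟩ := Finite.exists_max (fun i => DepolAux.sminVal d (lam i))
  have hsup : (⨆ i, minOutEntropy (depol d (lam i))) = DepolAux.sminVal d (lam i0) := by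
    rw [iSup_congr hminOut]
    exact le_antisymm (ciSup_le (fun i => hi0 i))
      (le_ciSup (Set.Finite.bddAbove (Set.finite_range (fun i => DepolAux.sminVal d (lam i)))) i0)
  have hinf : (⨅ i, holevoCap (depol d (lam i))) = L - DepolAux.sminVal d (lam i0) := by
    rw [iInf_congr hcap]
    exact le_antisymm (ciInf_le (Set.Finite.bddBelow (Set.finite_range (fun i => L - DepolAux.sminVal d (lam i)))) i0)
      (le_ciInf (fun i => sub_le_sub_left (hi0 i) L))
  constructor
  · have hmemT : (⨅ i : Fin M, holevoCap (depol d (lam i)))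
        ∈ {x | ∃ (k : ℕ) (p : Fin k → ℝ) (ρ : Fin k → Matrix (Fin d) (Fin d) ℂ),
          IsEnsemble p ρ ∧ x = ⨅ i : Fin M, holevoQ (depol d (lam i)) p ρ} := by
      refine ⟨d, fun _ => 1/(d:ℝ), fun j => DepolAux.basisState d j,
        DepolAux.basis_ensemble hd0, ?_⟩
      calc ⨅ i, holevoCap (depol d (lam i)) = ⨅ i, (L - DepolAux.sminVal d (lam i)) :=
            iInf_congr hcap
        _ = ⨅ i, holevoQ (depol d (lam i)) (fun _ : Fin d => 1/(d:ℝ))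
            (fun j => DepolAux.basisState d j) := (iInf_congr hQbasis).symm
    have hubT : ∀ x ∈ {x | ∃ (k : ℕ) (p : Fin k → ℝ) (ρ : Fin k → Matrix (Fin d) (Fin d) ℂ),
          IsEnsemble p ρ ∧ x = ⨅ i : Fin M, holevoQ (depol d (lam i)) p ρ},
        x ≤ ⨅ i : Fin M, holevoCap (depol d (lam i)) := by
      rintro x ⟨k, p, ρ, he, rfl⟩
      refine le_ciInf (fun i => ?_)
      calc (⨅ i' : Fin M, holevoQ (depol d (lam i')) p ρ)
          ≤ holevoQ (depol d (lam i)) p ρ :=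
            ciInf_le (Set.Finite.bddBelow (Set.finite_range (fun i' : Fin M => holevoQ (depol d (lam i')) p ρ))) i
        _ ≤ L - DepolAux.sminVal d (lam i) := DepolAux.holevoQ_le (lam i) hd
            (hlam i).1 (hlam i).2 he
        _ = holevoCap (depol d (lam i)) := (hcap i).symm
    exact le_antisymm (csSup_le ⟨_, hmemT⟩ hubT) (le_csSup ⟨_, hubT⟩ hmemT)
  · rw [hinf, hsup]
end
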